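/- Let k ≥ 1 and l be integers, N ≥ 1, and let Λ₁, …, Λ_N be invertible n×n complex matrices and P a constant n×n matrix such that P = −(Λ_a^k + Λ_a^{k−l}) for every a. Then for arbitrary constant m×n matrices A_a, the function θ(t, j) := Σ_{a=1}^N A_a exp(Λ_a^l t) Λ_a^j satisfies θ_t = θ_{(l)} and θ_{(l)} = −θ_{(l−k)} P − θ. Likewise, if Λ̃₁, …, Λ̃_N are invertible n×n matrices and Q a constant n×n matrix with Q = −(Λ̃_a^k + Λ̃_a^{k−l}) for every a, then for arbitrary constant n×m matrices B_a, the function η(t, j) := Σ_{a=1}^N exp(−Λ̃_a^l t) Λ̃_a^{−j} B_a satisfies η_t = −η_{(−l)} and −η_{(−l)} = Q η_{(k−l)} + η. -/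

import Mathlib

open Matrix

lemma exp_entry_hasDerivAt {n : ℕ} (M : Matrix (Fin n) (Fin n) ℂ) (t : ℝ) (p q : Fin n) :
    HasDerivAt (fun s : ℝ => NormedSpace.exp (s • M) p q)
      ((NormedSpace.exp (t • M) * M) p q) t := by
  letI : SeminormedRing (Matrix (Fin n) (Fin n) ℂ) := Matrix.linftyOpSemiNormedRing
  letI : NormedRing (Matrix (Fin n) (Fin n) ℂ) := Matrix.linftyOpNormedRing
  letI : NormedAlgebra ℝ (Matrix (Fin n) (Fin n) ℂ) := Matrix.linftyOpNormedAlgebra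
  have h := hasDerivAt_exp_smul_const (𝕂 := ℝ) M t
  let L : Matrix (Fin n) (Fin n) ℂ →L[ℝ] ℂ :=
    { toFun := fun X => X p q
      map_add' := fun _ _ => rfl
      map_smul' := fun _ _ => rfl
      cont := by exact (continuous_apply q).comp (continuous_apply p) }
  have h2 : HasDerivAt (fun s : ℝ => L (NormedSpace.exp (s • M)))
      (L (NormedSpace.exp (t • M) * M)) t := L.hasFDerivAt.comp_hasDerivAt t h
  exact h2

lemma hasDerivAt_mul_exp_mul {m n p : ℕ} (A : Matrix (Fin m) (Fin n) ℂ)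
    (M : Matrix (Fin n) (Fin n) ℂ) (C : Matrix (Fin n) (Fin p) ℂ) (t : ℝ)
    (a : Fin m) (b : Fin p) :
    HasDerivAt (fun s : ℝ => (A * NormedSpace.exp (s • M) * C) a b)
      ((A * (NormedSpace.exp (t • M) * M) * C) a b) t := by
  simp only [Matrix.mul_apply, Finset.sum_mul]
  refine HasDerivAt.fun_sum fun j _ => HasDerivAt.fun_sum fun i _ => ?_
  exact ((exp_entry_hasDerivAt M t i j).const_mul (A a i)).mul_const (C j b)

lemma hasDerivAt_exp_mul {n p : ℕ} (M : Matrix (Fin n) (Fin n) ℂ)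
    (C : Matrix (Fin n) (Fin p) ℂ) (t : ℝ) (a : Fin n) (b : Fin p) :
    HasDerivAt (fun s : ℝ => (NormedSpace.exp (s • M) * C) a b)
      ((NormedSpace.exp (t • M) * M * C) a b) t := by
  simpa using hasDerivAt_mul_exp_mul (1 : Matrix (Fin n) (Fin n) ℂ) M C t a b

example {n : ℕ} (X M : Matrix (Fin n) (Fin n) ℂ) (h : Commute X M) :
    Commute X (NormedSpace.exp M) := h.exp_right

/-- explicit solutions of the linear equations of the binary Darboux
transformation for the first family of generalized Volterra lattices with constant seed.
With `P = −(Λ_a^k + Λ_a^{k−l})` for all `a`, `θ = Σ_a A_a exp(Λ_a^l t) Λ_a^j` satisfies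
`θ_t = θ_{(l)}` and `θ_{(l)} = −θ_{(l−k)} P − θ`; with `Q = −(Λ̃_a^k + Λ̃_a^{k−l})` for all
`a`, `η = Σ_a exp(−Λ̃_a^l t) Λ̃_a^{−j} B_a` satisfies `η_t = −η_{(−l)}` and
`−η_{(−l)} = Q η_{(k−l)} + η`. -/
theorem stmt_12 (m n N : ℕ) (hN : 1 ≤ N) (k l : ℤ) (hk : 1 ≤ k)
    (Λ Λt : Fin N → Matrix (Fin n) (Fin n) ℂ)
    (hΛ : ∀ a, IsUnit (Λ a)) (hΛt : ∀ a, IsUnit (Λt a))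
    (P Q : Matrix (Fin n) (Fin n) ℂ)
    (hP : ∀ a, P = -((Λ a) ^ k + (Λ a) ^ (k - l)))
    (hQ : ∀ a, Q = -((Λt a) ^ k + (Λt a) ^ (k - l)))
    (A : Fin N → Matrix (Fin m) (Fin n) ℂ) (B : Fin N → Matrix (Fin n) (Fin m) ℂ)
    (θ : ℝ → ℤ → Matrix (Fin m) (Fin n) ℂ)
    (η : ℝ → ℤ → Matrix (Fin n) (Fin m) ℂ)
    (hθ : ∀ t j, θ t j = ∑ a : Fin N, A a * NormedSpace.exp (t • (Λ a) ^ l) * (Λ a) ^ j)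
    (hη : ∀ t j, η t j = ∑ a : Fin N, NormedSpace.exp ((-t) • (Λt a) ^ l) * (Λt a) ^ (-j) * B a) :
    (∀ t j (a : Fin m) (b : Fin n),
      HasDerivAt (fun s => θ s j a b) (θ t (j + l) a b) t) ∧
    (∀ t j, θ t (j + l) = -(θ t (j + (l - k)) * P) - θ t j) ∧
    (∀ t j (a : Fin n) (b : Fin m),
      HasDerivAt (fun s => η s j a b) (-(η t (j - l)) a b) t) ∧
    (∀ t j, -η t (j - l) = Q * η t (j + (k - l)) + η t j) := by
  have hdet : ∀ a, IsUnit (Λ a).det := fun a => (Matrix.isUnit_iff_isUnit_det _).mp (hΛ a)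
  have hdet' : ∀ a, IsUnit (Λt a).det := fun a => (Matrix.isUnit_iff_isUnit_det _).mp (hΛt a)
  refine ⟨?_, ?_, ?_, ?_⟩
  · intro t j a b
    simp only [hθ, Matrix.sum_apply]
    refine HasDerivAt.fun_sum fun x _ => ?_
    have h := hasDerivAt_mul_exp_mul (A x) ((Λ x) ^ l) ((Λ x) ^ j) t a b
    have e : A x * (NormedSpace.exp (t • (Λ x) ^ l) * (Λ x) ^ l) * (Λ x) ^ j
        = A x * NormedSpace.exp (t • (Λ x) ^ l) * (Λ x) ^ (j + l) := by
      rw [add_comm j l, Matrix.zpow_add (hdet x)]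
      simp [Matrix.mul_assoc]
    rw [e] at h
    exact h
  · intro t j
    simp only [hθ]
    rw [Matrix.sum_mul, ← Finset.sum_neg_distrib, ← Finset.sum_sub_distrib]
    refine Finset.sum_congr rfl fun x _ => ?_
    rw [hP x]
    have h1 : (Λ x) ^ (j + (l - k)) * (Λ x) ^ k = (Λ x) ^ (j + l) := by
      rw [← Matrix.zpow_add (hdet x)]; congr 1; ring
    have h2 : (Λ x) ^ (j + (l - k)) * (Λ x) ^ (k - l) = (Λ x) ^ j := by
      rw [← Matrix.zpow_add (hdet x)]; congr 1; ring
    simp only [Matrix.mul_neg, neg_neg, Matrix.mul_add, Matrix.mul_assoc, h1, h2]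
    abel
  · intro t j a b
    simp only [hη, Matrix.sum_apply, Matrix.neg_apply, ← Finset.sum_neg_distrib]
    refine HasDerivAt.fun_sum fun x _ => ?_
    have hz : (Λt x) ^ l * (Λt x) ^ (-j) = (Λt x) ^ (-(j - l)) := by
      rw [← Matrix.zpow_add (hdet' x)]; congr 1; ring
    have h := hasDerivAt_exp_mul (-((Λt x) ^ l)) ((Λt x) ^ (-j) * B x) t a b
    have e : NormedSpace.exp (t • -((Λt x) ^ l)) * -((Λt x) ^ l) * ((Λt x) ^ (-j) * B x)
        = -(NormedSpace.exp (t • -((Λt x) ^ l)) * ((Λt x) ^ (-(j - l)) * B x)) := by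
      rw [← hz]
      simp [Matrix.mul_neg, Matrix.neg_mul, Matrix.mul_assoc]
    rw [e] at h
    have hs : ∀ s : ℝ, (-s) • (Λt x) ^ l = s • -((Λt x) ^ l) := by
      intro s; rw [neg_smul, smul_neg]
    simp only [hs, Matrix.mul_assoc, Matrix.neg_apply]
    exact h
  · intro t j
    simp only [hη]
    rw [← Finset.sum_neg_distrib, Matrix.mul_sum, ← Finset.sum_add_distrib]
    refine Finset.sum_congr rfl fun x _ => ?_
    rw [hQ x]
    have h1 : (Λt x) ^ k * (Λt x) ^ (-(j + (k - l))) = (Λt x) ^ (-(j - l)) := by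
      rw [← Matrix.zpow_add (hdet' x)]; congr 1; ring
    have h2 : (Λt x) ^ (k - l) * (Λt x) ^ (-(j + (k - l))) = (Λt x) ^ (-j) := by
      rw [← Matrix.zpow_add (hdet' x)]; congr 1; ring
    have h1b : (Λt x) ^ k * ((Λt x) ^ (-(j + (k - l))) * B x) = (Λt x) ^ (-(j - l)) * B x := by
      rw [← Matrix.mul_assoc, h1]
    have h2b : (Λt x) ^ (k - l) * ((Λt x) ^ (-(j + (k - l))) * B x) = (Λt x) ^ (-j) * B x := by
      rw [← Matrix.mul_assoc, h2]
    have hcz : Commute ((Λt x) ^ k + (Λt x) ^ (k - l)) ((-t) • (Λt x) ^ l) := by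
      have hc : ∀ u v : ℤ, Commute ((Λt x) ^ u) ((Λt x) ^ v) := by
        intro u v
        show _ * _ = _ * _
        rw [← Matrix.zpow_add (hdet' x), ← Matrix.zpow_add (hdet' x), add_comm]
      exact ((hc k l).add_left (hc (k - l) l)).smul_right (-t)
    have hcomm := ((hcz.neg_left).exp_right).eq
    simp only [Matrix.mul_assoc]
    rw [← Matrix.mul_assoc (-((Λt x) ^ k + (Λt x) ^ (k - l))), hcomm, Matrix.mul_assoc]
    simp only [Matrix.neg_mul, Matrix.add_mul, h1b, h2b, Matrix.mul_neg, Matrix.mul_add]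
    abel
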